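/- Define K : ℝ × ℝ → ℝ by K(x,y) = x/(x²+y²) if |x−y| ≥ 1 and K(x,y) = 0 otherwise. Then there exists a constant C > 0 such that for every f ∈ L²(ℝ) the integral (T f)(x) = ∫_ℝ K(x,y) f(y) dy converges absolutely for almost every x ∈ ℝ and ‖T f‖_{L²(ℝ)} ≤ C·‖f‖_{L²(ℝ)}. -/

import Mathlib

open MeasureTheory

section Stmt14Aux

open Set
open scoped ENNReal


lemma key (p a : ℝ) (hp1 : -1 < p) (hp2 : p < 1) (ha : 0 < a) :
    ∫⁻ t in Set.Ioi (0:ℝ), ENNReal.ofReal (t ^ p / (t ^ 2 + a ^ 2)) ≤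
      ENNReal.ofReal ((1/(p+1) + 1/(1-p)) * a ^ (p - 1)) := by
  have hsplit : Set.Ioi (0:ℝ) = Set.Ioc 0 a ∪ Set.Ioi a := (Set.Ioc_union_Ioi_eq_Ioi ha.le).symm
  rw [hsplit, lintegral_union measurableSet_Ioi (Set.Ioc_disjoint_Ioi le_rfl)]
  have h1 : ∫⁻ t in Set.Ioc (0:ℝ) a, ENNReal.ofReal (t ^ p / (t ^ 2 + a ^ 2))
      ≤ ENNReal.ofReal (1/(p+1) * a ^ (p - 1)) := by
    have hb : ∀ t ∈ Set.Ioc (0:ℝ) a, ENNReal.ofReal (t ^ p / (t ^ 2 + a ^ 2))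
        ≤ ENNReal.ofReal (t ^ p / a ^ 2) := by
      intro t ht
      apply ENNReal.ofReal_le_ofReal
      apply div_le_div_of_nonneg_left (Real.rpow_nonneg ht.1.le p) (by positivity)
      nlinarith [sq_nonneg t]
    calc ∫⁻ t in Set.Ioc (0:ℝ) a, ENNReal.ofReal (t ^ p / (t ^ 2 + a ^ 2))
        ≤ ∫⁻ t in Set.Ioc (0:ℝ) a, ENNReal.ofReal (t ^ p / a ^ 2) := by
          apply setLIntegral_mono' measurableSet_Ioc hb
      _ = ENNReal.ofReal (∫ t in Set.Ioc (0:ℝ) a, t ^ p / a ^ 2) := by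
          rw [ofReal_integral_eq_lintegral_ofReal]
          · have : IntegrableOn (fun t : ℝ => t ^ p) (Set.Ioc 0 a) := by
              have := (intervalIntegral.intervalIntegrable_rpow' (a := 0) (b := a) hp1)
              rwa [intervalIntegrable_iff_integrableOn_Ioc_of_le ha.le] at this
            exact this.div_const _
          · filter_upwards [ae_restrict_mem measurableSet_Ioc] with t ht
            exact div_nonneg (Real.rpow_nonneg ht.1.le p) (by positivity)
      _ ≤ ENNReal.ofReal (1/(p+1) * a ^ (p - 1)) := by
          apply ENNReal.ofReal_le_ofReal
          rw [MeasureTheory.integral_div, ← intervalIntegral.integral_of_le ha.le,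
            integral_rpow (Or.inl hp1), Real.zero_rpow (by linarith : p + 1 ≠ 0), sub_zero]
          have e1 : a ^ (p+1) = a ^ (p-1) * a ^ 2 := by
            rw [← Real.rpow_natCast a 2, ← Real.rpow_add ha]; norm_num; ring_nf
          rw [e1]
          apply le_of_eq
          field_simp [(show p + 1 ≠ 0 by linarith)]
  have h2 : ∫⁻ t in Set.Ioi a, ENNReal.ofReal (t ^ p / (t ^ 2 + a ^ 2))
      ≤ ENNReal.ofReal (1/(1-p) * a ^ (p - 1)) := by
    have hb : ∀ t ∈ Set.Ioi a, ENNReal.ofReal (t ^ p / (t ^ 2 + a ^ 2))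
        ≤ ENNReal.ofReal (t ^ (p - 2)) := by
      intro t ht
      have ht0 : 0 < t := ha.trans ht
      apply ENNReal.ofReal_le_ofReal
      have : t ^ (p-2) = t ^ p / t ^ (2:ℝ) := by
        rw [← Real.rpow_sub ht0]
      rw [this]
      have ht2 : t ^ (2:ℝ) = t ^ 2 := by
        rw [← Real.rpow_natCast t 2]; norm_num
      rw [ht2]
      apply div_le_div_of_nonneg_left (Real.rpow_nonneg ht0.le p) (by positivity)
      nlinarith [sq_nonneg a]
    calc ∫⁻ t in Set.Ioi a, ENNReal.ofReal (t ^ p / (t ^ 2 + a ^ 2))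
        ≤ ∫⁻ t in Set.Ioi a, ENNReal.ofReal (t ^ (p - 2)) := by
          apply setLIntegral_mono' measurableSet_Ioi hb
      _ = ENNReal.ofReal (∫ t in Set.Ioi a, t ^ (p-2)) := by
          rw [ofReal_integral_eq_lintegral_ofReal]
          · exact integrableOn_Ioi_rpow_of_lt (by linarith) ha
          · filter_upwards [ae_restrict_mem measurableSet_Ioi] with t ht
            exact Real.rpow_nonneg (ha.trans ht).le _
      _ ≤ ENNReal.ofReal (1/(1-p) * a ^ (p - 1)) := by
          apply ENNReal.ofReal_le_ofReal
          rw [integral_Ioi_rpow_of_lt (by linarith) ha]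
          rw [show p - 2 + 1 = p - 1 by ring,
            show -a ^ (p-1) / (p - 1) = 1/(1-p) * a ^ (p-1) by
              rw [show (1:ℝ)-p = -(p-1) by ring, one_div, inv_neg]
              ring]
  calc _ ≤ ENNReal.ofReal (1/(p+1) * a ^ (p - 1)) + ENNReal.ofReal (1/(1-p) * a ^ (p - 1)) :=
        add_le_add h1 h2
    _ = ENNReal.ofReal ((1/(p+1) + 1/(1-p)) * a ^ (p - 1)) := by
        rw [← ENNReal.ofReal_add
          (mul_nonneg (div_nonneg zero_le_one (by linarith)) (Real.rpow_nonneg ha.le _))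
          (mul_nonneg (div_nonneg zero_le_one (by linarith)) (Real.rpow_nonneg ha.le _))]
        ring_nf

lemma lintegral_even_eq (f : ℝ → ℝ≥0∞) (hf : ∀ t, f (-t) = f t) :
    (∫⁻ t, f t) = 2 * ∫⁻ t in Set.Ioi (0:ℝ), f t := by
  have h1 : (∫⁻ t, f t) = (∫⁻ t in Set.Iio (0:ℝ), f t) + ∫⁻ t in Set.Ici (0:ℝ), f t := by
    rw [← Set.compl_Iio]
    exact (lintegral_add_compl f measurableSet_Iio).symm
  have h2 : ∫⁻ t in Set.Ici (0:ℝ), f t = ∫⁻ t in Set.Ioi (0:ℝ), f t :=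
    setLIntegral_congr (Ioi_ae_eq_Ici (μ := volume) (a := (0:ℝ))).symm
  have h3 : ∫⁻ t in Set.Iio (0:ℝ), f t = ∫⁻ t in Set.Ioi (0:ℝ), f t := by
    have := (Measure.measurePreserving_neg (volume : Measure ℝ)).setLIntegral_comp_emb
      measurableEmbedding_neg f (Set.Ioi 0)
    rw [Set.image_neg_Ioi, neg_zero] at this
    rw [← this]
    exact (setLIntegral_congr_fun measurableSet_Ioi (fun t _ => (hf t).symm)).symm

  rw [h1, h2, h3, two_mul]

lemma keyR (p a : ℝ) (hp1 : -1 < p) (hp2 : p < 1) (ha : 0 < a) :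
    (∫⁻ t : ℝ, ENNReal.ofReal (|t| ^ p / (t ^ 2 + a ^ 2))) ≤
      ENNReal.ofReal (2 * ((1/(p+1) + 1/(1-p)) * a ^ (p - 1))) := by
  rw [lintegral_even_eq _ (by intro t; rw [abs_neg, neg_pow]; ring_nf)]
  have : ∫⁻ t in Set.Ioi (0:ℝ), ENNReal.ofReal (|t| ^ p / (t ^ 2 + a ^ 2))
      = ∫⁻ t in Set.Ioi (0:ℝ), ENNReal.ofReal (t ^ p / (t ^ 2 + a ^ 2)) :=
    setLIntegral_congr_fun measurableSet_Ioi
      (fun t ht => by rw [abs_of_pos (Set.mem_Ioi.mp ht)])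
  rw [this, ENNReal.ofReal_mul (by norm_num), ENNReal.ofReal_ofNat]
  exact mul_le_mul_right (key p a hp1 hp2 ha) 2

noncomputable def W (t : ℝ) : ℝ≥0∞ := ENNReal.ofReal (|t| ^ (-(1/2) : ℝ))

lemma keyR_half (a : ℝ) (ha : 0 < a) :
    (∫⁻ t : ℝ, ENNReal.ofReal (|t| ^ ((1/2):ℝ) / (t ^ 2 + a ^ 2))) ≤
      ENNReal.ofReal ((16/3) * a ^ (-(1/2) : ℝ)) := by
  have h := keyR (1/2) a (by norm_num) (by norm_num) ha
  have e : (2 : ℝ) * ((1/((1/2)+1) + 1/(1-(1/2))) * a ^ ((1/2) - 1 : ℝ))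
      = (16/3) * a ^ (-(1/2) : ℝ) := by norm_num; ring
  rwa [e] at h

lemma keyR_neghalf (a : ℝ) (ha : 0 < a) :
    (∫⁻ t : ℝ, ENNReal.ofReal (|t| ^ (-(1/2):ℝ) / (t ^ 2 + a ^ 2))) ≤
      ENNReal.ofReal ((16/3) * a ^ (-(3/2) : ℝ)) := by
  have h := keyR (-(1/2)) a (by norm_num) (by norm_num) ha
  have e : (2 : ℝ) * ((1/(-(1/2)+1) + 1/(1-(-(1/2)))) * a ^ ((-(1/2)) - 1 : ℝ))
      = (16/3) * a ^ (-(3/2) : ℝ) := by norm_num; ring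
  rwa [e] at h

lemma measG (p a : ℝ) : Measurable (fun t : ℝ => ENNReal.ofReal (|t| ^ p / (t ^ 2 + a ^ 2))) := by
  fun_prop

lemma SB1 (x : ℝ) :
    (∫⁻ y : ℝ, ENNReal.ofReal |if 1 ≤ |x - y| then x / (x ^ 2 + y ^ 2) else 0| * W y)
      ≤ ENNReal.ofReal 32 * W x := by
  rcases eq_or_ne x 0 with rfl | hx
  · simp only [zero_div, ite_self, abs_zero, ENNReal.ofReal_zero, zero_mul, lintegral_zero]
    exact zero_le
  · have hax : 0 < |x| := abs_pos.mpr hx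
    have hpt : ∀ y : ℝ, ENNReal.ofReal |if 1 ≤ |x - y| then x / (x ^ 2 + y ^ 2) else 0| * W y
        ≤ ENNReal.ofReal |x| * ENNReal.ofReal (|y| ^ (-(1/2):ℝ) / (y ^ 2 + |x| ^ 2)) := by
      intro y
      rw [W, ← ENNReal.ofReal_mul (abs_nonneg _), ← ENNReal.ofReal_mul (abs_nonneg _)]
      apply ENNReal.ofReal_le_ofReal
      have hden : (0:ℝ) < x ^ 2 + y ^ 2 := by positivity
      have h1 : |if 1 ≤ |x - y| then x / (x ^ 2 + y ^ 2) else 0| ≤ |x| / (x ^ 2 + y ^ 2) := by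
        split
        · rw [abs_div, abs_of_pos hden]
        · simp only [abs_zero]
          positivity
      calc |if 1 ≤ |x - y| then x / (x ^ 2 + y ^ 2) else 0| * |y| ^ (-(1/2):ℝ)
          ≤ |x| / (x ^ 2 + y ^ 2) * |y| ^ (-(1/2):ℝ) :=
            mul_le_mul_of_nonneg_right h1 (Real.rpow_nonneg (abs_nonneg _) _)
        _ = |x| * (|y| ^ (-(1/2):ℝ) / (y ^ 2 + |x| ^ 2)) := by
            rw [sq_abs]; ring
    calc (∫⁻ y : ℝ, ENNReal.ofReal |if 1 ≤ |x - y| then x / (x ^ 2 + y ^ 2) else 0| * W y)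
        ≤ ∫⁻ y : ℝ, ENNReal.ofReal |x| * ENNReal.ofReal (|y| ^ (-(1/2):ℝ) / (y ^ 2 + |x| ^ 2)) :=
          lintegral_mono hpt
      _ = ENNReal.ofReal |x| * ∫⁻ y : ℝ, ENNReal.ofReal (|y| ^ (-(1/2):ℝ) / (y ^ 2 + |x| ^ 2)) :=
          lintegral_const_mul _ (measG _ _)
      _ ≤ ENNReal.ofReal |x| * ENNReal.ofReal ((16/3) * |x| ^ (-(3/2) : ℝ)) :=
          mul_le_mul_right (keyR_neghalf |x| hax) _
      _ ≤ ENNReal.ofReal 32 * W x := by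
          rw [← ENNReal.ofReal_mul (abs_nonneg _), W,
            ← ENNReal.ofReal_mul (by norm_num : (0:ℝ) ≤ 32)]
          apply ENNReal.ofReal_le_ofReal
          have h2 : |x| * |x| ^ (-(3/2):ℝ) = |x| ^ (-(1/2):ℝ) := by
            nth_rewrite 1 [← Real.rpow_one |x|]
            rw [← Real.rpow_add hax]; norm_num
          calc |x| * ((16/3) * |x| ^ (-(3/2):ℝ)) = (16/3) * (|x| * |x| ^ (-(3/2):ℝ)) := by ring
            _ = (16/3) * |x| ^ (-(1/2):ℝ) := by rw [h2]
            _ ≤ 32 * |x| ^ (-(1/2):ℝ) :=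
                mul_le_mul_of_nonneg_right (by norm_num) (Real.rpow_nonneg (abs_nonneg _) _)

lemma SB2 {y : ℝ} (hy : y ≠ 0) :
    (∫⁻ x : ℝ, ENNReal.ofReal |if 1 ≤ |x - y| then x / (x ^ 2 + y ^ 2) else 0| * W x)
      ≤ ENNReal.ofReal 32 * W y := by
  have hay : 0 < |y| := abs_pos.mpr hy
  have hden : ∀ x : ℝ, (0:ℝ) < x ^ 2 + y ^ 2 := fun x => by positivity
  -- pointwise bound by the indicator kernel i x
  have hpt : ∀ x : ℝ, ENNReal.ofReal |if 1 ≤ |x - y| then x / (x ^ 2 + y ^ 2) else 0| * W x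
      ≤ ENNReal.ofReal (if 1 ≤ |x - y| then |x| ^ ((1/2):ℝ) / (x ^ 2 + y ^ 2) else 0) := by
    intro x
    rw [W, ← ENNReal.ofReal_mul (abs_nonneg _)]
    apply ENNReal.ofReal_le_ofReal
    split
    · rw [abs_div, abs_of_pos (hden x)]
      rcases eq_or_ne x 0 with rfl | hx
      · simp [Real.zero_rpow (by norm_num : ((1:ℝ)/2) ≠ 0)]
      · have h2 : |x| * |x| ^ (-(1/2):ℝ) = |x| ^ ((1/2):ℝ) := by
          nth_rewrite 1 [← Real.rpow_one |x|]
          rw [← Real.rpow_add (abs_pos.mpr hx)]; norm_num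
        rw [div_mul_eq_mul_div, h2]
    · simp
  calc (∫⁻ x : ℝ, ENNReal.ofReal |if 1 ≤ |x - y| then x / (x ^ 2 + y ^ 2) else 0| * W x)
      ≤ ∫⁻ x : ℝ, ENNReal.ofReal (if 1 ≤ |x - y| then |x| ^ ((1/2):ℝ) / (x ^ 2 + y ^ 2) else 0) :=
        lintegral_mono hpt
    _ ≤ ENNReal.ofReal 32 * W y := by
      rcases le_or_gt 1 |y| with hy1 | hy1
      · -- large y : drop the indicator
        calc (∫⁻ x : ℝ, ENNReal.ofReal
                (if 1 ≤ |x - y| then |x| ^ ((1/2):ℝ) / (x ^ 2 + y ^ 2) else 0))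
            ≤ ∫⁻ x : ℝ, ENNReal.ofReal (|x| ^ ((1/2):ℝ) / (x ^ 2 + |y| ^ 2)) := by
              apply lintegral_mono
              intro x
              apply ENNReal.ofReal_le_ofReal
              rw [sq_abs]
              split
              · exact le_rfl
              · positivity
          _ ≤ ENNReal.ofReal ((16/3) * |y| ^ (-(1/2) : ℝ)) := keyR_half |y| hay
          _ ≤ ENNReal.ofReal 32 * W y := by
              rw [W, ← ENNReal.ofReal_mul (by norm_num : (0:ℝ) ≤ 32)]
              exact ENNReal.ofReal_le_ofReal
                (mul_le_mul_of_nonneg_right (by norm_num) (Real.rpow_nonneg (abs_nonneg _) _))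
      · -- small y : use the truncation
        have hW1 : (1:ℝ) ≤ |y| ^ (-(1/2):ℝ) :=
          Real.one_le_rpow_of_pos_of_le_one_of_nonpos hay hy1.le (by norm_num)
        have hpt2 : ∀ x : ℝ, (if 1 ≤ |x - y| then |x| ^ ((1/2):ℝ) / (x ^ 2 + y ^ 2) else 0)
            ≤ 2 * (|x| ^ ((1/2):ℝ) / (x ^ 2 + (1/2:ℝ) ^ 2)) := by
          intro x
          split
          case isTrue h =>
            have h1 : (1:ℝ) ≤ (x - y) ^ 2 := by nlinarith [abs_nonneg (x-y), sq_abs (x-y)]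
            have h2 : (x ^ 2 + (1/2:ℝ) ^ 2) / 2 ≤ x ^ 2 + y ^ 2 := by nlinarith [sq_nonneg (x+y)]
            calc |x| ^ ((1/2):ℝ) / (x ^ 2 + y ^ 2)
                ≤ |x| ^ ((1/2):ℝ) / ((x ^ 2 + (1/2:ℝ) ^ 2) / 2) :=
                  div_le_div_of_nonneg_left (Real.rpow_nonneg (abs_nonneg _) _)
                    (by positivity) h2
              _ = 2 * (|x| ^ ((1/2):ℝ) / (x ^ 2 + (1/2:ℝ) ^ 2)) := by
                  field_simp
          case isFalse h => positivity
        calc (∫⁻ x : ℝ, ENNReal.ofReal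
                (if 1 ≤ |x - y| then |x| ^ ((1/2):ℝ) / (x ^ 2 + y ^ 2) else 0))
            ≤ ∫⁻ x : ℝ, ENNReal.ofReal 2
                * ENNReal.ofReal (|x| ^ ((1/2):ℝ) / (x ^ 2 + (1/2:ℝ) ^ 2)) := by
              apply lintegral_mono
              intro x
              dsimp only
              rw [← ENNReal.ofReal_mul (by norm_num : (0:ℝ) ≤ 2)]
              exact ENNReal.ofReal_le_ofReal (hpt2 x)
          _ = ENNReal.ofReal 2
              * ∫⁻ x : ℝ, ENNReal.ofReal (|x| ^ ((1/2):ℝ) / (x ^ 2 + (1/2:ℝ) ^ 2)) :=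
              lintegral_const_mul _ (measG _ _)
          _ ≤ ENNReal.ofReal 2 * ENNReal.ofReal ((16/3) * (1/2:ℝ) ^ (-(1/2) : ℝ)) :=
              mul_le_mul_right (keyR_half (1/2) (by norm_num)) _
          _ ≤ ENNReal.ofReal 32 * W y := by
              rw [← ENNReal.ofReal_mul (by norm_num : (0:ℝ) ≤ 2), W,
                ← ENNReal.ofReal_mul (by norm_num : (0:ℝ) ≤ 32)]
              apply ENNReal.ofReal_le_ofReal
              have hhalf : ((1/2:ℝ)) ^ (-(1/2):ℝ) ≤ 2 := by
                have e1 : ((1/2:ℝ)) ^ (-(1/2):ℝ) = 2 ^ ((1/2):ℝ) := by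
                  rw [show (1/2:ℝ) = 2 ^ (-1:ℝ) by rw [Real.rpow_neg_one]; norm_num,
                    ← Real.rpow_mul (by norm_num : (0:ℝ) ≤ 2)]
                  norm_num
                rw [e1]
                calc (2:ℝ) ^ ((1/2):ℝ) ≤ 2 ^ (1:ℝ) :=
                      Real.rpow_le_rpow_of_exponent_le (by norm_num) (by norm_num)
                  _ = 2 := Real.rpow_one 2
              calc (2:ℝ) * ((16/3) * (1/2:ℝ) ^ (-(1/2) : ℝ)) ≤ 2 * ((16/3) * 2) := by
                    have := hhalf
                    nlinarith [Real.rpow_nonneg (show (0:ℝ) ≤ 1/2 by norm_num) (-(1/2):ℝ)]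
                _ ≤ 32 * |y| ^ (-(1/2):ℝ) := by nlinarith [hW1]


lemma measW : Measurable W := by unfold W; fun_prop

lemma Wne_top (t : ℝ) : W t ≠ ⊤ := ENNReal.ofReal_ne_top

lemma Wpos {t : ℝ} (ht : t ≠ 0) : W t ≠ 0 := by
  simp only [W, ne_eq, ENNReal.ofReal_eq_zero, not_le]
  exact Real.rpow_pos_of_pos (abs_pos.mpr ht) _

lemma meask : Measurable (fun p : ℝ × ℝ =>
    if 1 ≤ |p.1 - p.2| then p.1 / (p.1 ^ 2 + p.2 ^ 2) else 0) := by
  refine Measurable.ite ?_ ?_ measurable_const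
  · exact measurableSet_le measurable_const (measurable_fst.sub measurable_snd).abs
  · exact measurable_fst.div ((measurable_fst.pow_const 2).add (measurable_snd.pow_const 2))

lemma measKe : Measurable (fun p : ℝ × ℝ =>
    ENNReal.ofReal |if 1 ≤ |p.1 - p.2| then p.1 / (p.1 ^ 2 + p.2 ^ 2) else 0|) :=
  ENNReal.measurable_ofReal.comp meask.abs

lemma ae_ne_zero : ∀ᵐ t : ℝ, t ≠ 0 := by
  rw [ae_iff]
  simp only [ne_eq, not_not]
  rw [show {a : ℝ | a = 0} = {0} by ext a; simp]
  exact measure_singleton 0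

set_option maxHeartbeats 2000000 in
/-- `L²`-boundedness of the truncated kernel `x/(x²+y²)` (from the proof of Lemma 2.3). -/
theorem stmt14 (K : ℝ → ℝ → ℝ)
    (hK : K = fun x y => if 1 ≤ |x - y| then x / (x ^ 2 + y ^ 2) else 0) :
    ∃ C > 0, ∀ f : ℝ → ℝ, MemLp f 2 volume →
      (∀ᵐ x : ℝ, Integrable (fun y : ℝ => K x y * f y)) ∧
      eLpNorm (fun x : ℝ => ∫ y : ℝ, K x y * f y) 2 volume
        ≤ ENNReal.ofReal C * eLpNorm f 2 volume := by
  subst hK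
  refine ⟨32, by norm_num, ?_⟩
  intro f hf
  -- replace f by a strongly measurable representative g
  set g : ℝ → ℝ := hf.1.mk f with hgdef
  have hgm : StronglyMeasurable g := hf.1.stronglyMeasurable_mk
  have hfg : f =ᵐ[volume] g := hf.1.ae_eq_mk
  have hgmm : Measurable g := hgm.measurable
  have hg2 : MemLp g 2 volume := hf.ae_eq hfg
  set k : ℝ → ℝ → ℝ := fun x y => if 1 ≤ |x - y| then x / (x ^ 2 + y ^ 2) else 0 with hkdef
  set Ke : ℝ → ℝ → ℝ≥0∞ := fun x y => ENNReal.ofReal |k x y| with hKedef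
  set F : ℝ → ℝ≥0∞ := fun y => ENNReal.ofReal |g y| with hFdef
  have hFm : Measurable F := ENNReal.measurable_ofReal.comp hgmm.abs
  have hKem : Measurable (fun p : ℝ × ℝ => Ke p.1 p.2) := measKe
  have hKex : ∀ x, Measurable (fun y => Ke x y) := fun x => hKem.comp (measurable_prodMk_left)
  have hKey : ∀ y, Measurable (fun x => Ke x y) := fun y =>
    hKem.comp (measurable_id.prodMk measurable_const)
  have hFenn : ∀ y, (‖g y‖₊ : ℝ≥0∞) = F y := fun y => Real.enorm_eq_ofReal_abs (g y)
  -- the two Schur bounds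
  have hS1 : ∀ x, (∫⁻ y, Ke x y * W y) ≤ ENNReal.ofReal 32 * W x := fun x => SB1 x
  have hS2 : ∀ y, y ≠ 0 → (∫⁻ x, Ke x y * W x) ≤ ENNReal.ofReal 32 * W y := fun y hy => SB2 hy
  -- the auxiliary (Schur) quantity
  set H : ℝ → ℝ≥0∞ := fun x => ∫⁻ y, Ke x y * F y ^ (2:ℝ) * (W y)⁻¹ with hHdef
  have hHm : Measurable H := by
    apply Measurable.lintegral_prod_right
    exact (hKem.mul ((hFm.comp measurable_snd).pow_const _)).mul
      ((measW.comp measurable_snd).inv)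
  -- Cauchy-Schwarz step
  have hCS : ∀ x : ℝ, (∫⁻ y, Ke x y * F y) ≤
      (ENNReal.ofReal 32 * W x) ^ ((1:ℝ)/2) * (H x) ^ ((1:ℝ)/2) := by
    intro x
    set u : ℝ → ℝ≥0∞ := fun y => (Ke x y * W y) ^ ((1:ℝ)/2) with hudef
    set v : ℝ → ℝ≥0∞ := fun y => (Ke x y * F y ^ (2:ℝ) * (W y)⁻¹) ^ ((1:ℝ)/2) with hvdef
    have hum : Measurable u := ((hKex x).mul measW).pow_const _
    have hvm : Measurable v := (((hKex x).mul (hFm.pow_const _)).mul measW.inv).pow_const _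
    have h22 : Real.HolderConjugate 2 2 := Real.HolderConjugate.two_two
    have hholder := ENNReal.lintegral_mul_le_Lp_mul_Lq volume h22 hum.aemeasurable hvm.aemeasurable
    have hL : (∫⁻ y, Ke x y * F y) ≤ ∫⁻ y, (u * v) y := by
      apply lintegral_mono_ae
      filter_upwards [ae_ne_zero] with y hy
      have hW0 : W y ≠ 0 := Wpos hy
      have hprod : u y * v y = Ke x y * F y := by
        rw [hudef, hvdef]
        dsimp only
        rw [← ENNReal.mul_rpow_of_nonneg _ _ (by norm_num : (0:ℝ) ≤ 1/2)]
        have e2 : Ke x y * W y * (Ke x y * F y ^ (2:ℝ) * (W y)⁻¹)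
            = (Ke x y * F y) ^ (2:ℝ) := by
          simp only [ENNReal.rpow_two]
          calc Ke x y * W y * (Ke x y * F y ^ 2 * (W y)⁻¹)
              = (Ke x y * F y) ^ 2 * (W y * (W y)⁻¹) := by ring
            _ = (Ke x y * F y) ^ 2 := by
                rw [ENNReal.mul_inv_cancel hW0 (Wne_top y), mul_one]
        rw [e2, ← ENNReal.rpow_mul]
        norm_num
      rw [Pi.mul_apply, hprod]
    have hu2 : (∫⁻ y, u y ^ (2:ℝ)) = ∫⁻ y, Ke x y * W y := by
      apply lintegral_congr
      intro y
      rw [hudef]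
      dsimp only
      rw [← ENNReal.rpow_mul]
      norm_num
    have hv2 : (∫⁻ y, v y ^ (2:ℝ)) = H x := by
      apply lintegral_congr
      intro y
      rw [hvdef]
      dsimp only
      rw [← ENNReal.rpow_mul]
      norm_num
    calc (∫⁻ y, Ke x y * F y) ≤ ∫⁻ y, (u * v) y := hL
      _ ≤ (∫⁻ y, u y ^ (2:ℝ)) ^ ((1:ℝ)/2) * (∫⁻ y, v y ^ (2:ℝ)) ^ ((1:ℝ)/2) := hholder
      _ = (∫⁻ y, Ke x y * W y) ^ ((1:ℝ)/2) * (H x) ^ ((1:ℝ)/2) := by rw [hu2, hv2]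
      _ ≤ (ENNReal.ofReal 32 * W x) ^ ((1:ℝ)/2) * (H x) ^ ((1:ℝ)/2) :=
          mul_le_mul_left (ENNReal.rpow_le_rpow (hS1 x) (by norm_num)) _
  -- the L² mass of f
  have hfin : (∫⁻ y, F y ^ (2:ℝ)) < ⊤ := by
    have h2 := hg2.2
    rw [eLpNorm_eq_lintegral_rpow_enorm_toReal (by norm_num) (by norm_num)] at h2
    simp only [ENNReal.toReal_ofNat] at h2
    have : (∫⁻ y, (‖g y‖₊ : ℝ≥0∞) ^ (2:ℝ)) < ⊤ := by
      by_contra hc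
      push_neg at hc
      rw [show (∫⁻ (x : ℝ), ‖g x‖ₑ ^ (2:ℝ)) = ⊤ from top_le_iff.mp hc] at h2
      simp [ENNReal.top_rpow_of_pos] at h2
    simpa only [hFenn] using this
  -- the key double-integral estimate
  have hJ : (∫⁻ x, W x * H x) ≤ ENNReal.ofReal 32 * ∫⁻ y, F y ^ (2:ℝ) := by
    have h1 : (∫⁻ x, W x * H x)
        = ∫⁻ y, ∫⁻ x, W x * (Ke x y * F y ^ (2:ℝ) * (W y)⁻¹) := by
      rw [← lintegral_lintegral_swap]
      · apply lintegral_congr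
        intro x
        exact (lintegral_const_mul' _ _ (Wne_top x)).symm
      · apply Measurable.aemeasurable
        exact (measW.comp measurable_fst).mul ((hKem.mul
          ((hFm.comp measurable_snd).pow_const _)).mul ((measW.comp measurable_snd).inv))
    rw [h1]
    calc (∫⁻ y, ∫⁻ x, W x * (Ke x y * F y ^ (2:ℝ) * (W y)⁻¹))
        ≤ ∫⁻ y, ENNReal.ofReal 32 * F y ^ (2:ℝ) := by
          apply lintegral_mono_ae
          filter_upwards [ae_ne_zero] with y hy
          have h2 : (∫⁻ x, W x * (Ke x y * F y ^ (2:ℝ) * (W y)⁻¹))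
              = (∫⁻ x, Ke x y * W x) * (F y ^ (2:ℝ) * (W y)⁻¹) := by
            rw [← lintegral_mul_const (f := fun x => Ke x y * W x) _ ((hKey y).mul measW)]
            apply lintegral_congr
            intro x
            ring
          rw [h2]
          calc (∫⁻ x, Ke x y * W x) * (F y ^ (2:ℝ) * (W y)⁻¹)
              ≤ (ENNReal.ofReal 32 * W y) * (F y ^ (2:ℝ) * (W y)⁻¹) :=
                mul_le_mul_left (hS2 y hy) _
            _ = ENNReal.ofReal 32 * F y ^ (2:ℝ) * (W y * (W y)⁻¹) := by ring
            _ = ENNReal.ofReal 32 * F y ^ (2:ℝ) := by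
                rw [ENNReal.mul_inv_cancel (Wpos hy) (Wne_top y), mul_one]
      _ = ENNReal.ofReal 32 * ∫⁻ y, F y ^ (2:ℝ) :=
          lintegral_const_mul' _ _ ENNReal.ofReal_ne_top
  have hJfin : (∫⁻ x, W x * H x) ≠ ⊤ :=
    (lt_of_le_of_lt hJ (ENNReal.mul_lt_top ENNReal.ofReal_lt_top hfin)).ne
  -- almost everywhere control
  have hmain : ∀ᵐ x : ℝ, (∫⁻ y, Ke x y * F y) < ⊤ ∧
      (∫⁻ y, Ke x y * F y) ^ (2:ℝ) ≤ ENNReal.ofReal 32 * W x * H x := by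
    filter_upwards [ae_lt_top (measW.mul hHm) hJfin, ae_ne_zero] with x hx hx0
    have hHfin : H x < ⊤ := by
      by_contra hc
      push_neg at hc
      rw [Pi.mul_apply, top_le_iff.mp hc, ENNReal.mul_top (Wpos hx0)] at hx
      exact (lt_irrefl _ hx).elim
    constructor
    · refine lt_of_le_of_lt (hCS x) (ENNReal.mul_lt_top ?_ ?_)
      · exact ENNReal.rpow_lt_top_of_nonneg (by norm_num)
          (ENNReal.mul_lt_top ENNReal.ofReal_lt_top (Wne_top x).lt_top).ne
      · exact ENNReal.rpow_lt_top_of_nonneg (by norm_num) hHfin.ne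
    · calc (∫⁻ y, Ke x y * F y) ^ (2:ℝ)
          ≤ ((ENNReal.ofReal 32 * W x) ^ ((1:ℝ)/2) * (H x) ^ ((1:ℝ)/2)) ^ (2:ℝ) :=
            ENNReal.rpow_le_rpow (hCS x) (by norm_num)
        _ = ENNReal.ofReal 32 * W x * H x := by
            rw [ENNReal.mul_rpow_of_nonneg _ _ (by norm_num : (0:ℝ) ≤ 2),
              ← ENNReal.rpow_mul, ← ENNReal.rpow_mul]
            norm_num
  -- pointwise identification of the integrand with the measurable representative
  have hcongr : ∀ x : ℝ, (fun y => k x y * f y) =ᵐ[volume] (fun y => k x y * g y) :=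
    fun x => hfg.mono fun y hy => by dsimp only; rw [hy]
  have hnn : ∀ x : ℝ, (∫⁻ y, (‖k x y * g y‖₊ : ℝ≥0∞)) = ∫⁻ y, Ke x y * F y := by
    intro x
    apply lintegral_congr
    intro y
    rw [nnnorm_mul, ENNReal.coe_mul]
    exact congr (congrArg (· * ·) (Real.enorm_eq_ofReal_abs _)) (Real.enorm_eq_ofReal_abs _)
  constructor
  · -- a.e. integrability
    filter_upwards [hmain] with x hx
    rw [integrable_congr (hcongr x)]
    refine ⟨((meask.comp (measurable_const.prodMk measurable_id)).aestronglyMeasurable.mul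
      hgm.aestronglyMeasurable), ?_⟩
    show (∫⁻ y, (‖k x y * g y‖₊ : ℝ≥0∞)) < ⊤
    rw [hnn x]
    exact hx.1
  · -- the norm bound
    have hTeq : (fun x : ℝ => ∫ y, k x y * f y) = fun x : ℝ => ∫ y, k x y * g y := by
      funext x
      exact integral_congr_ae (hcongr x)
    rw [hTeq, eLpNorm_congr_ae hfg,
      eLpNorm_eq_lintegral_rpow_enorm_toReal (by norm_num) (by norm_num),
      eLpNorm_eq_lintegral_rpow_enorm_toReal (by norm_num) (by norm_num)]
    simp only [ENNReal.toReal_ofNat]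
    have hbound : (∫⁻ x, (‖∫ y, k x y * g y‖₊ : ℝ≥0∞) ^ (2:ℝ))
        ≤ ENNReal.ofReal 32 * (ENNReal.ofReal 32 * ∫⁻ y, F y ^ (2:ℝ)) := by
      calc (∫⁻ x, (‖∫ y, k x y * g y‖₊ : ℝ≥0∞) ^ (2:ℝ))
          ≤ ∫⁻ x, ENNReal.ofReal 32 * W x * H x := by
            apply lintegral_mono_ae
            filter_upwards [hmain] with x hx
            refine le_trans (ENNReal.rpow_le_rpow ?_ (by norm_num : (0:ℝ) ≤ 2)) hx.2
            rw [← hnn x]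
            exact enorm_integral_le_lintegral_enorm _
        _ = ENNReal.ofReal 32 * ∫⁻ x, W x * H x := by
            rw [← lintegral_const_mul' _ _ ENNReal.ofReal_ne_top]
            apply lintegral_congr
            intro x
            ring
        _ ≤ ENNReal.ofReal 32 * (ENNReal.ofReal 32 * ∫⁻ y, F y ^ (2:ℝ)) :=
            mul_le_mul_right hJ _
    calc (∫⁻ x, (‖∫ y, k x y * g y‖₊ : ℝ≥0∞) ^ (2:ℝ)) ^ ((1:ℝ)/2)
        ≤ (ENNReal.ofReal 32 * (ENNReal.ofReal 32 * ∫⁻ y, F y ^ (2:ℝ))) ^ ((1:ℝ)/2) :=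
          ENNReal.rpow_le_rpow hbound (by norm_num)
      _ = ENNReal.ofReal 32 * ((∫⁻ y, F y ^ (2:ℝ))) ^ ((1:ℝ)/2) := by
          rw [show ENNReal.ofReal 32 * (ENNReal.ofReal 32 * ∫⁻ y, F y ^ (2:ℝ))
              = (ENNReal.ofReal 32) ^ (2:ℝ) * ∫⁻ y, F y ^ (2:ℝ) by
            rw [ENNReal.rpow_two, sq]; ring]
          rw [ENNReal.mul_rpow_of_nonneg _ _ (by norm_num : (0:ℝ) ≤ 1/2),
            ← ENNReal.rpow_mul]
          norm_num
      _ = ENNReal.ofReal 32 * (∫⁻ y, (‖g y‖₊ : ℝ≥0∞) ^ (2:ℝ)) ^ ((1:ℝ)/2) := by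
          simp only [hFenn]

end Stmt14Aux
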